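/- Let n ≥ 1 and let B ∈ ℝ^{n×n} be an Anti-Monge matrix. Then the anti-diagonal permutation rev given by rev(i) = n+1−i minimizes the assignment cost: for every permutation σ of {1,…,n}, ∑_{i=1}^{n} B_{i,n+1−i} ≤ ∑_{i=1}^{n} B_{i,σ(i)}. -/

import Mathlib

open Finset

/-- **Anti-Monge matrices: the anti-diagonal permutation is an optimal assignment.**
If `B` is an `n × n` Anti-Monge matrix (`B i j + B k l ≥ B i l + B k j` for `i < k`, `j < l`),
then the anti-diagonal assignment `i ↦ n+1-i` (here `Fin.rev` in 0-based indexing)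
has cost at most that of any permutation. -/
theorem antiMonge_rev_optimal (n : ℕ) (hn : 1 ≤ n) (B : Fin n → Fin n → ℝ)
    (hB : ∀ i k j l : Fin n, i < k → j < l → B i l + B k j ≤ B i j + B k l)
    (σ : Equiv.Perm (Fin n)) :
    ∑ i, B i i.rev ≤ ∑ i, B i (σ i) := by
  obtain ⟨m, rfl⟩ : ∃ m, n = m + 1 := ⟨n - 1, (Nat.succ_pred_eq_of_pos hn).symm⟩
  suffices H : ∀ (N : ℕ) (σ : Equiv.Perm (Fin (m + 1))),
      (∑ i, i.1 * (σ i).1) = N → ∑ i, B i i.rev ≤ ∑ i, B i (σ i) from H _ σ rfl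
  intro N
  induction N using Nat.strong_induction_on with
  | _ N ih =>
    intro σ hσ
    by_cases hasc : ∃ i : Fin m, σ i.castSucc < σ i.succ
    · obtain ⟨i, hi⟩ := hasc
      set a := i.castSucc with ha
      set b := i.succ with hb
      have hab : a < b := Fin.castSucc_lt_succ
      have hne : a ≠ b := ne_of_lt hab
      set τ : Equiv.Perm (Fin (m + 1)) := σ * Equiv.swap a b with hτ
      have hτa : τ a = σ b := by simp [hτ, Equiv.swap_apply_left]
      have hτb : τ b = σ a := by simp [hτ, Equiv.swap_apply_right]
      have hτo : ∀ j, j ≠ a → j ≠ b → τ j = σ j := by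
        intro j h1 h2
        simp [hτ, Equiv.swap_apply_of_ne_of_ne h1 h2]
      -- generic reindexing of sums through the swap
      have key : ∀ {M : Type} [AddCommMonoid M] (F : Fin (m+1) → Fin (m+1) → M),
          ∑ j, F j (τ j) = ∑ j, F (Equiv.swap a b j) (σ j) := by
        intro M _ F
        rw [← Equiv.sum_comp (Equiv.swap a b) (fun j => F (Equiv.swap a b j) (σ j))]
        apply Finset.sum_congr rfl
        intro j _
        simp [hτ, Equiv.swap_apply_self]
      -- the swap-difference is supported on {a, b}
      have pair : ∀ {M : Type} [AddCommGroup M] (G : Fin (m+1) → M),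
          ∑ j, (G (Equiv.swap a b j) - G j) =
            (G b - G a) + (G a - G b) := by
        intro M _ G
        rw [← Finset.sum_subset (Finset.subset_univ {a, b})]
        · rw [Finset.sum_pair hne, Equiv.swap_apply_left, Equiv.swap_apply_right]
        · intro x _ hx
          simp only [Finset.mem_insert, Finset.mem_singleton, not_or] at hx
          rw [Equiv.swap_apply_of_ne_of_ne hx.1 hx.2, sub_self]
      -- the potential strictly decreases
      have hpot : (∑ j, j.1 * (τ j).1) < N := by
        have hcast : ((∑ j, j.1 * (τ j).1 : ℕ) : ℤ) < ((N : ℕ) : ℤ) := by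
          rw [← hσ]
          push_cast
          have h1 : (∑ j, (j.1 : ℤ) * ((τ j).1 : ℤ)) =
              ∑ j, ((Equiv.swap a b j).1 : ℤ) * ((σ j).1 : ℤ) :=
            key (fun x y => (x.1 : ℤ) * (y.1 : ℤ))
          have h2 : (∑ j, (((Equiv.swap a b j).1 : ℤ) * ((σ j).1 : ℤ)
                - (j.1 : ℤ) * ((σ j).1 : ℤ))) =
              (((b.1 : ℤ) * (σ a).1 - (a.1 : ℤ) * (σ a).1)
                + ((a.1 : ℤ) * (σ b).1 - (b.1 : ℤ) * (σ b).1)) := by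
            rw [← Finset.sum_subset (Finset.subset_univ {a, b})]
            · rw [Finset.sum_pair hne, Equiv.swap_apply_left, Equiv.swap_apply_right]
            · intro x _ hx
              simp only [Finset.mem_insert, Finset.mem_singleton, not_or] at hx
              rw [Equiv.swap_apply_of_ne_of_ne hx.1 hx.2, sub_self]
          rw [Finset.sum_sub_distrib] at h2
          have hav : (a.1 : ℤ) < b.1 := by exact_mod_cast hab
          have hσv : ((σ a).1 : ℤ) < (σ b).1 := by exact_mod_cast hi
          nlinarith [h1, h2]
        exact_mod_cast hcast
      have hcost : ∑ j, B j (τ j) ≤ ∑ j, B j (σ j) := by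
        have h1 : ∑ j, B j (τ j) = ∑ j, B (Equiv.swap a b j) (σ j) := key B
        have h2 : ∑ j, (B (Equiv.swap a b j) (σ j) - B j (σ j)) =
            (B b (σ a) - B a (σ a)) + (B a (σ b) - B b (σ b)) := by
          rw [← Finset.sum_subset (Finset.subset_univ {a, b})]
          · rw [Finset.sum_pair hne, Equiv.swap_apply_left, Equiv.swap_apply_right]
          · intro x _ hx
            simp only [Finset.mem_insert, Finset.mem_singleton, not_or] at hx
            rw [Equiv.swap_apply_of_ne_of_ne hx.1 hx.2, sub_self]
        rw [Finset.sum_sub_distrib] at h2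
        have hAM := hB a b (σ a) (σ b) hab hi
        linarith [h1, h2]
      exact le_trans (ih _ hpot τ rfl) hcost
    · -- no ascent: σ is strictly antitone, hence σ = rev
      push_neg at hasc
      have hanti : StrictAnti (fun j => σ j) := by
        rw [Fin.strictAnti_iff_succ_lt]
        intro i
        rcases lt_or_eq_of_le (hasc i) with h | h
        · exact h
        · exact absurd (σ.injective h) (by simp [Fin.ext_iff])
      have hmono : StrictMono (fun j : Fin (m+1) => σ j.rev) := by
        intro x y hxy
        exact hanti (Fin.rev_lt_rev.mpr hxy)
      have hid : (fun j : Fin (m+1) => σ j.rev) = id := by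
        have hwf : WellFoundedLT (Fin (m+1)) := inferInstance
        refine (StrictMono.range_inj hmono strictMono_id).mp ?_
        rw [Set.range_id]
        exact Set.range_eq_univ.mpr fun y => ⟨(σ.symm y).rev, by simp⟩
      have hrev : ∀ j, σ j = j.rev := by
        intro j
        have := congrFun hid j.rev
        simp only [Fin.rev_rev, id_eq] at this
        exact this
      refine le_of_eq (Finset.sum_congr rfl fun j _ => ?_)
      rw [hrev j]
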